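/- For any edge of the graph, i.e., vertices i, j with A i j = 1, the edge K-connectivity centrality ĥ K i j := ĥout K i * ĥin K j satisfies ĥ 1 i j = (degout i : ℝ≥0∞) * (degin j : ℝ≥0∞) and is nondecreasing in K: ĥ 1 i j ≤ ĥ 2 i j ≤ ⋯ ≤ ĥ (n−1) i j. -/

import Mathlib

open scoped ENNReal

open scoped Classical in
/-- The `K`-path length matrix entry `ℓK i j`. -/
noncomputable def ellK (n : ℕ) (A : Matrix (Fin n) (Fin n) ℕ) (K : ℕ) (i j : Fin n) : ℕ∞ :=
  if i = j then 0
  else sInf ((fun k : ℕ => (k : ℕ∞)) '' {k : ℕ | 1 ≤ k ∧ k ≤ K ∧ (A ^ k) i j ≠ 0})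

open scoped Classical in
/-- The `K`-path counter matrix entry `cK i j`. -/
noncomputable def cKmat (n : ℕ) (A : Matrix (Fin n) (Fin n) ℕ) (K : ℕ) (i j : Fin n) : ℕ :=
  if i = j then 1
  else if ∃ k : ℕ, 1 ≤ k ∧ k ≤ K ∧ (A ^ k) i j ≠ 0 then
    (A ^ sInf {k : ℕ | 1 ≤ k ∧ k ≤ K ∧ (A ^ k) i j ≠ 0}) i j
  else 0

/-- The out-degree of node `i`. -/
def degout (n : ℕ) (A : Matrix (Fin n) (Fin n) ℕ) (i : Fin n) : ℕ :=
  ∑ k : Fin n, A i k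

/-- The in-degree of node `i`. -/
def degin (n : ℕ) (A : Matrix (Fin n) (Fin n) ℕ) (i : Fin n) : ℕ :=
  ∑ k : Fin n, A k i

/-- The connectivity `K_out`-centrality of node `i`. -/
noncomputable def hatHout (n : ℕ) (A : Matrix (Fin n) (Fin n) ℕ) (K : ℕ) (i : Fin n) : ℝ≥0∞ :=
  ∑ j ∈ Finset.univ.erase i, (cKmat n A K i j : ℝ≥0∞) / (ellK n A K i j : ℝ≥0∞)

/-- The connectivity `K_in`-centrality of node `i`. -/
noncomputable def hatHin (n : ℕ) (A : Matrix (Fin n) (Fin n) ℕ) (K : ℕ) (i : Fin n) : ℝ≥0∞ :=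
  ∑ j ∈ Finset.univ.erase i, (cKmat n A K j i : ℝ≥0∞) / (ellK n A K j i : ℝ≥0∞)

/-- The global `K`-connectivity `cG K`. -/
noncomputable def globalConn (n : ℕ) (A : Matrix (Fin n) (Fin n) ℕ) (K : ℕ) : ℝ≥0∞ :=
  ((n : ℝ≥0∞) * ((n : ℝ≥0∞) - 1))⁻¹ *
    ∑ i : Fin n, ∑ j ∈ Finset.univ.erase i, (cKmat n A K i j : ℝ≥0∞) / (ellK n A K i j : ℝ≥0∞)

/-- The edge `K`-connectivity centrality of an edge `e(i → j)`. -/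
noncomputable def edgeConn (n : ℕ) (A : Matrix (Fin n) (Fin n) ℕ) (K : ℕ) (i j : Fin n) : ℝ≥0∞ :=
  hatHout n A K i * hatHin n A K j

open scoped Classical

private lemma ellK_eq_of_ne (n : ℕ) (A : Matrix (Fin n) (Fin n) ℕ) (K : ℕ) (i j : Fin n)
    (hij : i ≠ j) (h : {k : ℕ | 1 ≤ k ∧ k ≤ K ∧ (A ^ k) i j ≠ 0}.Nonempty) :
    ellK n A K i j = ((sInf {k : ℕ | 1 ≤ k ∧ k ≤ K ∧ (A ^ k) i j ≠ 0} : ℕ) : ℕ∞) := by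
  rw [ellK, if_neg hij]
  apply le_antisymm
  · exact sInf_le ⟨_, Nat.sInf_mem h, rfl⟩
  · refine le_sInf ?_
    rintro x ⟨k, hk, rfl⟩
    simpa using (Nat.cast_le.mpr (Nat.sInf_le hk) : ((sInf {k : ℕ | 1 ≤ k ∧ k ≤ K ∧ (A ^ k) i j ≠ 0} : ℕ) : ℕ∞) ≤ (k : ℕ∞))

private lemma term_zero (n : ℕ) (A : Matrix (Fin n) (Fin n) ℕ) (K : ℕ) (i j : Fin n)
    (hij : i ≠ j) (h : ¬ ∃ k : ℕ, 1 ≤ k ∧ k ≤ K ∧ (A ^ k) i j ≠ 0) :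
    (cKmat n A K i j : ℝ≥0∞) / (ellK n A K i j : ℝ≥0∞) = 0 := by
  rw [cKmat, if_neg hij, if_neg h]
  simp

private lemma term_mono (n : ℕ) (A : Matrix (Fin n) (Fin n) ℕ) (K K' : ℕ) (hKK' : K ≤ K')
    (i j : Fin n) :
    (cKmat n A K i j : ℝ≥0∞) / (ellK n A K i j : ℝ≥0∞) ≤
      (cKmat n A K' i j : ℝ≥0∞) / (ellK n A K' i j : ℝ≥0∞) := by
  by_cases hij : i = j
  · subst hij; simp [cKmat, ellK]
  · by_cases h : ∃ k : ℕ, 1 ≤ k ∧ k ≤ K ∧ (A ^ k) i j ≠ 0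
    · set S := {k : ℕ | 1 ≤ k ∧ k ≤ K ∧ (A ^ k) i j ≠ 0} with hS
      set S' := {k : ℕ | 1 ≤ k ∧ k ≤ K' ∧ (A ^ k) i j ≠ 0} with hS'
      have hsub : S ⊆ S' := fun k ⟨h1, h2, h3⟩ => ⟨h1, h2.trans hKK', h3⟩
      have hne : S.Nonempty := h
      have hne' : S'.Nonempty := hne.imp fun k hk => hsub hk
      have h' : ∃ k : ℕ, 1 ≤ k ∧ k ≤ K' ∧ (A ^ k) i j ≠ 0 := hne'
      have hinf : sInf S = sInf S' := by
        apply le_antisymm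
        · have hmem' := Nat.sInf_mem hne'
          have hle : sInf S' ≤ sInf S := Nat.sInf_le (hsub (Nat.sInf_mem hne))
          refine Nat.sInf_le ?_
          obtain ⟨h1, _, h3⟩ := hmem'
          exact ⟨h1, hle.trans (Nat.sInf_mem hne).2.1, h3⟩
        · exact Nat.sInf_le (hsub (Nat.sInf_mem hne))
      rw [cKmat, if_neg hij, if_pos h, cKmat, if_neg hij, if_pos h',
        ellK_eq_of_ne n A K i j hij hne, ellK_eq_of_ne n A K' i j hij hne', ← hS, ← hS', hinf]
    · rw [term_zero n A K i j hij h]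
      exact zero_le

private lemma term_one (n : ℕ) (A : Matrix (Fin n) (Fin n) ℕ) (i j : Fin n) (hij : i ≠ j) :
    (cKmat n A 1 i j : ℝ≥0∞) / (ellK n A 1 i j : ℝ≥0∞) = (A i j : ℝ≥0∞) := by
  by_cases h : A i j = 0
  · rw [term_zero n A 1 i j hij, h, Nat.cast_zero]
    rintro ⟨k, h1, h2, h3⟩
    have : k = 1 := le_antisymm h2 h1
    subst this
    rw [pow_one] at h3
    exact h3 h
  · have hone : (1 : ℕ) ∈ {k : ℕ | 1 ≤ k ∧ k ≤ 1 ∧ (A ^ k) i j ≠ 0} := by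
      refine ⟨le_refl _, le_refl _, ?_⟩
      rw [pow_one]; exact h
    have hne : {k : ℕ | 1 ≤ k ∧ k ≤ 1 ∧ (A ^ k) i j ≠ 0}.Nonempty := ⟨1, hone⟩
    have hinf : sInf {k : ℕ | 1 ≤ k ∧ k ≤ 1 ∧ (A ^ k) i j ≠ 0} = 1 :=
      le_antisymm (Nat.sInf_le hone) (Nat.sInf_mem hne).1
    have hex : ∃ k : ℕ, 1 ≤ k ∧ k ≤ 1 ∧ (A ^ k) i j ≠ 0 := ⟨1, hone⟩
    rw [cKmat, if_neg hij, if_pos hex, ellK_eq_of_ne n A 1 i j hij hne, hinf, pow_one]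
    simp

private lemma hatHout_one (n : ℕ) (A : Matrix (Fin n) (Fin n) ℕ) (hdiag : ∀ i, A i i = 0)
    (i : Fin n) : hatHout n A 1 i = (degout n A i : ℝ≥0∞) := by
  rw [hatHout, degout, Nat.cast_sum]
  rw [← Finset.sum_erase Finset.univ (a := i) (by simp [hdiag i])]
  exact Finset.sum_congr rfl fun j hj => term_one n A i j (Finset.ne_of_mem_erase hj).symm

private lemma hatHin_one (n : ℕ) (A : Matrix (Fin n) (Fin n) ℕ) (hdiag : ∀ i, A i i = 0)
    (i : Fin n) : hatHin n A 1 i = (degin n A i : ℝ≥0∞) := by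
  rw [hatHin, degin, Nat.cast_sum]
  rw [← Finset.sum_erase Finset.univ (a := i) (by simp [hdiag i])]
  exact Finset.sum_congr rfl fun j hj => term_one n A j i (Finset.ne_of_mem_erase hj)


/-- for an edge `e(i → j)` (i.e. `A i j = 1`), the edge `K`-connectivity
centrality satisfies `ĥ 1 i j = degout i * degin j` and is nondecreasing in `K`. -/
theorem edgeConn_one_and_monotone (n : ℕ) (hn : 2 ≤ n)
    (A : Matrix (Fin n) (Fin n) ℕ)
    (hA : ∀ i j, A i j = 0 ∨ A i j = 1) (hdiag : ∀ i, A i i = 0)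
    (i j : Fin n) (hij : A i j = 1) :
    edgeConn n A 1 i j = (degout n A i : ℝ≥0∞) * (degin n A j : ℝ≥0∞) ∧
    (∀ K K' : ℕ, 1 ≤ K → K ≤ K' → K' ≤ n - 1 →
      edgeConn n A K i j ≤ edgeConn n A K' i j) := by
  constructor
  · rw [edgeConn, hatHout_one n A hdiag i, hatHin_one n A hdiag j]
  · intro K K' _ hKK' _
    refine mul_le_mul' ?_ ?_
    · exact Finset.sum_le_sum fun k _ => term_mono n A K K' hKK' i k
    · exact Finset.sum_le_sum fun k _ => term_mono n A K K' hKK' k j
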